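/- A ring R is von Neumann regular if and only if the 2×2 matrix ring M₂(R) is SSP (the sum of any two direct summands of M₂(R) as a right module over itself is a direct summand). -/

import Mathlib

def IsSummand {R M : Type*} [Ring R] [AddCommGroup M] [Module R M]
    (p : Submodule R M) : Prop :=
  ∃ q : Submodule R M, IsCompl p q

section General
variable {S : Type*} [Ring S]

/-- The right ideal `{x | e * x = x}`, which for idempotent `e` equals `eS`. -/
def fixedBy (e : S) : Submodule Sᵐᵒᵖ S where
  carrier := {x | e * x = x}
  add_mem' := by intro a b ha hb; simp only [Set.mem_setOf_eq] at *; rw [mul_add, ha, hb]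
  zero_mem' := by simp
  smul_mem' := by
    intro s x hx
    simp only [Set.mem_setOf_eq] at *
    show e * (x * s.unop) = x * s.unop
    rw [← mul_assoc, hx]

lemma mem_fixedBy {e x : S} : x ∈ fixedBy e ↔ e * x = x := Iff.rfl

lemma mul_mem_fixedBy {e : S} (he : e * e = e) (y : S) : e * y ∈ fixedBy e := by
  rw [mem_fixedBy, ← mul_assoc, he]

lemma isCompl_fixedBy {e : S} (he : e * e = e) :
    IsCompl (fixedBy e) (fixedBy (1 - e)) := by
  constructor
  · rw [Submodule.disjoint_def]
    intro x hx hx'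
    rw [mem_fixedBy] at hx hx'
    have : (1 - e) * x = (1 - e) * (e * x) := by rw [hx]
    rw [hx', ← mul_assoc, sub_mul, one_mul, he, sub_self, zero_mul] at this
    exact this
  · rw [codisjoint_iff, eq_top_iff]
    intro x _
    have : x = e * x + (1 - e) * x := by noncomm_ring
    rw [this]
    exact Submodule.add_mem_sup (mul_mem_fixedBy he x)
      (mul_mem_fixedBy (by noncomm_ring [he]) x)

lemma isSummand_fixedBy {e : S} (he : e * e = e) : IsSummand (fixedBy e) :=
  ⟨_, isCompl_fixedBy he⟩

lemma exists_idem_of_isSummand {p : Submodule Sᵐᵒᵖ S} (h : IsSummand p) :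
    ∃ e : S, e * e = e ∧ p = fixedBy e := by
  obtain ⟨q, hc⟩ := h
  have h1 : (1 : S) ∈ p ⊔ q := by rw [hc.sup_eq_top]; trivial
  obtain ⟨e, he, f, hf, hef⟩ := Submodule.mem_sup.1 h1
  have key : ∀ x ∈ p, e * x = x := by
    intro x hx
    have hex : e * x ∈ p := by
      have := p.smul_mem (MulOpposite.op x) he
      simpa using this
    have hfx : f * x ∈ q := by
      have := q.smul_mem (MulOpposite.op x) hf
      simpa using this
    have hsum : e * x + f * x = x := by rw [← add_mul, hef, one_mul]
    have hfp : f * x ∈ p := by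
      have : f * x = x - e * x := eq_sub_of_add_eq' hsum
      rw [this]; exact p.sub_mem hx hex
    have : f * x = 0 := (Submodule.disjoint_def.1 hc.disjoint) _ hfp hfx
    rw [this, add_zero] at hsum
    exact hsum
  refine ⟨e, key e he, ?_⟩
  ext x
  rw [mem_fixedBy]
  constructor
  · exact key x
  · intro hx
    rw [← hx]
    have := p.smul_mem (MulOpposite.op x) he
    simpa using this

/-- If every element of `S` is von Neumann regular then `S` has SSP. -/
lemma ssp_of_regular (hreg : ∀ a : S, ∃ b : S, a = a * b * a)
    (p q : Submodule Sᵐᵒᵖ S) (hp : IsSummand p) (hq : IsSummand q) :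
    IsSummand (p ⊔ q) := by
  obtain ⟨e, he, rfl⟩ := exists_idem_of_isSummand hp
  obtain ⟨f, hf, rfl⟩ := exists_idem_of_isSummand hq
  set g := f - e * f with hg
  obtain ⟨h, hh⟩ := hreg g
  set f' := g * h with hf'
  have hf'g : f' * g = g := hh.symm
  have hfg' : g * h * g = g := by rw [← hf', hf'g]
  have hf'2 : f' * f' = f' := by rw [hf', ← mul_assoc, hfg']
  have hef' : e * f' = 0 := by
    have heg : e * g = 0 := by rw [hg, mul_sub, ← mul_assoc, he, sub_self]
    rw [hf', ← mul_assoc, heg, zero_mul]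
  set k := e + f' - f' * e with hk
  have hek : e * k = e := by
    rw [hk]
    simp only [mul_sub, mul_add, he, ← mul_assoc, hef', zero_mul, mul_zero, add_zero, sub_zero]
  have hf'k : f' * k = f' := by
    rw [hk]
    simp only [mul_sub, mul_add, ← mul_assoc, hf'2]
    try abel
  have hkk : k * k = k := by
    conv_lhs => rw [hk]
    simp only [sub_mul, add_mul, mul_assoc, hek, hf'k]
    rw [hek, hf'k]
    try rw [← hk]
  suffices hsup : fixedBy e ⊔ fixedBy f = fixedBy k by
    rw [hsup]; exact isSummand_fixedBy hkk
  apply le_antisymm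
  · apply sup_le
    · intro x hx
      rw [mem_fixedBy] at hx ⊢
      have : k * x = e * x + f' * x - f' * (e * x) := by rw [hk]; noncomm_ring
      rw [this, hx]
      noncomm_ring
    · intro x hx
      rw [mem_fixedBy] at hx ⊢
      have hgx : g * x = x - e * x := by
        rw [hg, sub_mul, mul_assoc, hx]
      have : k * x = e * x + f' * (x - e * x) := by rw [hk]; noncomm_ring
      rw [this, ← hgx, ← mul_assoc, hf'g, hgx]
      noncomm_ring
  · intro x hx
    rw [mem_fixedBy] at hx
    have hdecomp : x = e * x + g * (h * (x - e * x)) := by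
      have : k * x = e * x + f' * (x - e * x) := by rw [hk]; noncomm_ring
      rw [hx, hf', mul_assoc] at this
      exact this
    rw [hdecomp]
    apply Submodule.add_mem
    · exact Submodule.mem_sup_left (mul_mem_fixedBy he _)
    · set y := h * (x - e * x)
      have : g * y = f * y - e * (f * y) := by rw [hg]; noncomm_ring
      rw [this]
      exact Submodule.sub_mem _ (Submodule.mem_sup_right (mul_mem_fixedBy hf y))
        (Submodule.mem_sup_left (mul_mem_fixedBy he _))

end General


section Mat
variable {R : Type*} [Ring R]

lemma exists_gamma (hreg : ∀ a : R, ∃ b : R, a = a * b * a) (p q : R) :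
    ∃ α β : R, p * (α * p + β * q) = p ∧ q * (α * p + β * q) = q := by
  obtain ⟨x, hx⟩ := hreg p
  obtain ⟨y, hy⟩ := hreg (q - q * x * p)
  refine ⟨x - (1 - x * p) * y * (q * x), (1 - x * p) * y, ?_, ?_⟩
  · have expand : p * ((x - (1 - x * p) * y * (q * x)) * p + ((1 - x * p) * y) * q) =
        p * x * p + (p - p * x * p) * (y * q) - (p - p * x * p) * (y * (q * (x * p))) := by
      noncomm_ring
    rw [expand, ← hx, sub_self, zero_mul, zero_mul, sub_zero, add_zero]
  · have expand : q * ((x - (1 - x * p) * y * (q * x)) * p + ((1 - x * p) * y) * q) =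
        q * x * p + (q - q * x * p) * y * (q - q * x * p) := by
      noncomm_ring
    rw [expand, ← hy]
    noncomm_ring

/-- Abstract combination step, valid in any ring. -/
lemma key_combine {S : Type*} [Ring S] (A E1 E2 E12 : S)
    (hE1E1 : E1 * E1 = E1) (hE2E1 : E2 * E1 = E2)
    (hone : E1 + E2 * E12 = 1)
    (hcol : ∀ u : S, u * E1 = u → ∃ Γ, u * Γ * u = u) :
    ∃ B, A = A * B * A := by
  obtain ⟨v, hv⟩ : ∃ x, x = A * E1 := ⟨_, rfl⟩
  obtain ⟨w, hw⟩ : ∃ x, x = A * E2 := ⟨_, rfl⟩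
  have hvE : v * E1 = v := by rw [hv, mul_assoc, hE1E1]
  have hwE : w * E1 = w := by rw [hw, mul_assoc, hE2E1]
  obtain ⟨Γ₁, hΓ₁⟩ := hcol v hvE
  obtain ⟨K, hK⟩ : ∃ x, x = v * Γ₁ := ⟨_, rfl⟩
  have hKv : K * v = v := by rw [hK]; exact hΓ₁
  have hKK : K * K = K := by rw [hK, ← mul_assoc, hΓ₁]
  obtain ⟨g, hg⟩ : ∃ x, x = w - K * w := ⟨_, rfl⟩
  have hgE : g * E1 = g := by rw [hg, sub_mul, hwE, mul_assoc, hwE]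
  have hKg : K * g = 0 := by rw [hg, mul_sub, ← mul_assoc, hKK, sub_self]
  obtain ⟨Γ₂, hΓ₂⟩ := hcol g hgE
  obtain ⟨L, hL⟩ : ∃ x, x = g * Γ₂ := ⟨_, rfl⟩
  have hLg : L * g = g := by rw [hL]; exact hΓ₂
  obtain ⟨M, hM⟩ : ∃ x, x = K + L - L * K := ⟨_, rfl⟩
  have hMv : M * v = v := by
    rw [hM, sub_mul, add_mul, mul_assoc, hKv]; abel
  have hMg : M * g = g := by
    rw [hM, sub_mul, add_mul, mul_assoc, hKg, mul_zero, hLg]; abel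
  have hMK : M * K = K := by
    rw [hM, sub_mul, add_mul, mul_assoc, hKK]; abel
  have hMw : M * w = w := by
    have hw' : w = K * w + g := by rw [hg]; abel
    rw [hw', mul_add, ← mul_assoc, hMK, hMg]
  have hA : A = v + w * E12 := by
    rw [hv, hw, mul_assoc, ← mul_add, hone, mul_one]
  have hMA : M * A = A := by
    rw [hA, mul_add, hMv, ← mul_assoc, hMw]
  obtain ⟨C, hC⟩ : ∃ x,
      x = E1 * Γ₁ + (E2 - E1 * Γ₁ * w) * Γ₂ - (E2 - E1 * Γ₁ * w) * Γ₂ * K := ⟨_, rfl⟩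
  have hG : A * (E2 - E1 * Γ₁ * w) = g := by
    rw [mul_sub, ← hw, ← mul_assoc, ← mul_assoc, ← hv, ← hK, ← hg]
  have h1 : A * (E1 * Γ₁) = K := by rw [← mul_assoc, ← hv, ← hK]
  have h2 : A * ((E2 - E1 * Γ₁ * w) * Γ₂) = L := by rw [← mul_assoc, hG, ← hL]
  have h3 : A * ((E2 - E1 * Γ₁ * w) * Γ₂ * K) = L * K := by
    rw [← mul_assoc, ← mul_assoc, hG, ← hL]
  have hAC : A * C = M := by
    rw [hC, mul_sub, mul_add, h1, h2, h3, ← hM]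
  exact ⟨C, by rw [hAC, hMA]⟩

lemma col_summand (hreg : ∀ a : R, ∃ b : R, a = a * b * a)
    (u : Matrix (Fin 2) (Fin 2) R) (hu : u * !![1,0;0,0] = u) :
    ∃ Γ : Matrix (Fin 2) (Fin 2) R, u * Γ * u = u := by
  have h01 : u 0 1 = 0 := by
    have := congrFun (congrFun hu 0) 1
    simpa [Matrix.mul_apply, Fin.sum_univ_two] using this.symm
  have h11 : u 1 1 = 0 := by
    have := congrFun (congrFun hu 1) 1
    simpa [Matrix.mul_apply, Fin.sum_univ_two] using this.symm
  obtain ⟨p, hP⟩ : ∃ x, u 0 0 = x := ⟨_, rfl⟩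
  obtain ⟨q, hQ⟩ : ∃ x, u 1 0 = x := ⟨_, rfl⟩
  have hlit : u = !![p, 0; q, 0] := by
    ext i j
    fin_cases i <;> fin_cases j <;> simp [hP, hQ, h01, h11]
  obtain ⟨α, β, hp, hq⟩ := exists_gamma hreg p q
  refine ⟨!![α, β; 0, 0], ?_⟩
  rw [hlit, Matrix.mul_fin_two, Matrix.mul_fin_two]
  have e00 : (p * α + 0 * 0) * p + (p * β + 0 * 0) * q = p := by
    calc (p * α + 0 * 0) * p + (p * β + 0 * 0) * q
        = p * (α * p + β * q) := by noncomm_ring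
      _ = p := hp
  have e10 : (q * α + 0 * 0) * p + (q * β + 0 * 0) * q = q := by
    calc (q * α + 0 * 0) * p + (q * β + 0 * 0) * q
        = q * (α * p + β * q) := by noncomm_ring
      _ = q := hq
  have e01 : (p * α + 0 * 0) * 0 + (p * β + 0 * 0) * 0 = (0 : R) := by noncomm_ring
  have e11 : (q * α + 0 * 0) * 0 + (q * β + 0 * 0) * 0 = (0 : R) := by noncomm_ring
  rw [e00, e10, e01, e11]

lemma mat2_regular (hreg : ∀ a : R, ∃ b : R, a = a * b * a)
    (A : Matrix (Fin 2) (Fin 2) R) : ∃ B, A = A * B * A := by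
  apply key_combine A (!![1,0;0,0]) (!![0,0;1,0]) (!![0,1;0,0])
  · rw [Matrix.mul_fin_two]; norm_num
  · rw [Matrix.mul_fin_two]; norm_num
  · rw [Matrix.mul_fin_two, Matrix.one_fin_two]
    ext i j
    fin_cases i <;> fin_cases j <;> simp
  · exact col_summand hreg

end Mat


/-- `R` is von Neumann regular iff the `2 × 2` matrix ring `M₂(R)` is SSP. -/
theorem stmt13 {R : Type*} [Ring R] :
    (∀ a : R, ∃ b : R, a = a * b * a) ↔
    (∀ p q : Submodule (Matrix (Fin 2) (Fin 2) R)ᵐᵒᵖ (Matrix (Fin 2) (Fin 2) R),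
      IsSummand p → IsSummand q → IsSummand (p ⊔ q)) := by
  constructor
  · intro hreg
    exact ssp_of_regular (mat2_regular hreg)
  · intro hssp a
    have he : (!![1,0;0,0] : Matrix (Fin 2) (Fin 2) R) * !![1,0;0,0] = !![1,0;0,0] := by
      rw [Matrix.mul_fin_two]; norm_num
    have hf : (!![1,0;a,0] : Matrix (Fin 2) (Fin 2) R) * !![1,0;a,0] = !![1,0;a,0] := by
      rw [Matrix.mul_fin_two]; norm_num
    obtain ⟨g, hgg, hsup⟩ := exists_idem_of_isSummand
      (hssp _ _ (isSummand_fixedBy he) (isSummand_fixedBy hf))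
    have hge : g * !![1,0;0,0] = !![1,0;0,0] := by
      have h : (!![1,0;0,0] : Matrix (Fin 2) (Fin 2) R) ∈
          fixedBy (!![1,0;0,0] : Matrix (Fin 2) (Fin 2) R) ⊔ fixedBy !![1,0;a,0] :=
        Submodule.mem_sup_left (mem_fixedBy.2 he)
      rw [hsup] at h
      exact h
    have hgf : g * !![1,0;a,0] = !![1,0;a,0] := by
      have h : (!![1,0;a,0] : Matrix (Fin 2) (Fin 2) R) ∈
          fixedBy (!![1,0;0,0] : Matrix (Fin 2) (Fin 2) R) ⊔ fixedBy !![1,0;a,0] :=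
        Submodule.mem_sup_right (mem_fixedBy.2 hf)
      rw [hsup] at h
      exact h
    have hmem : g ∈ fixedBy (!![1,0;0,0] : Matrix (Fin 2) (Fin 2) R) ⊔ fixedBy !![1,0;a,0] := by
      rw [hsup]
      exact mem_fixedBy.2 hgg
    obtain ⟨u, hu, v, hv, huv⟩ := Submodule.mem_sup.1 hmem
    have hu' : !![1,0;0,0] * u = u := mem_fixedBy.1 hu
    have hv' : !![1,0;a,0] * v = v := mem_fixedBy.1 hv
    have hge' : (u + v) * !![1,0;0,0] = !![1,0;0,0] := by rw [huv, hge]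
    have hgf' : (u + v) * !![1,0;a,0] = !![1,0;a,0] := by rw [huv, hgf]
    have h10 : u 1 0 = 0 := by
      have h := congrFun (congrFun hu' 1) 0
      simpa [Matrix.mul_apply, Fin.sum_univ_two] using h.symm
    have h11 : u 1 1 = 0 := by
      have h := congrFun (congrFun hu' 1) 1
      simpa [Matrix.mul_apply, Fin.sum_univ_two] using h.symm
    have hv10 : v 1 0 = a * v 0 0 := by
      have h := congrFun (congrFun hv' 1) 0
      simpa [Matrix.mul_apply, Fin.sum_univ_two] using h.symm
    have hv11 : v 1 1 = a * v 0 1 := by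
      have h := congrFun (congrFun hv' 1) 1
      simpa [Matrix.mul_apply, Fin.sum_univ_two] using h.symm
    have hC : a * v 0 0 = 0 := by
      have h := congrFun (congrFun hge' 1) 0
      simp [Matrix.mul_apply, Fin.sum_univ_two, Matrix.add_apply, h10, hv10] at h
      exact h
    have hD : a = a * v 0 1 * a := by
      have h := congrFun (congrFun hgf' 1) 0
      simp [Matrix.mul_apply, Fin.sum_univ_two, Matrix.add_apply, h10, h11, hv10, hv11, hC] at h
      exact h.symm
    exact ⟨v 0 1, hD⟩
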